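/- Let ρ'_{XDE} be a cq-state where X is classical and uniform with respect to D (i.e., ρ'_{XD} = U_X ⊗ ρ'_D). Then there exist a register E', a state ρ_{XDE'} in which X is uniform with respect to D ⊗ E' (globally uniform), and an X-controlled quantum operation M from E' to E, such that ρ' = M(ρ). -/

import Mathlib

open Matrix
open scoped ComplexOrder Kronecker

/-- The square root of a positive semidefinite matrix (the definition `Matrix.PosSemidef.sqrt`
of the older Mathlib, which is no longer available). -/
noncomputable def Matrix.PosSemidef.sqrt {n : Type*} [Fintype n] [DecidableEq n]
    {A : Matrix n n ℂ} (hA : A.PosSemidef) : Matrix n n ℂ :=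
  (hA.1.eigenvectorUnitary : Matrix n n ℂ) * diagonal (((↑) : ℝ → ℂ) ∘ Real.sqrt ∘ hA.1.eigenvalues) *
    (star hA.1.eigenvectorUnitary : Matrix n n ℂ)

/-- The trace norm of a matrix: `tr √(AᴴA)`, i.e. the sum of singular values. -/
noncomputable def traceNorm {n : Type*} [Fintype n] [DecidableEq n]
    (A : Matrix n n ℂ) : ℝ :=
  ((Matrix.PosSemidef.sqrt (Matrix.posSemidef_conjTranspose_mul_self A)).trace).re

/-- A density operator: positive semidefinite with unit trace. -/
def IsDensity {n : Type*} [Fintype n] [DecidableEq n] (ρ : Matrix n n ℂ) : Prop :=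
  ρ.PosSemidef ∧ ρ.trace = 1

/-- The fidelity `F(ρ,σ) = ‖√ρ √σ‖₁` of two positive semidefinite matrices. -/
noncomputable def fidelity {n : Type*} [Fintype n] [DecidableEq n]
    {ρ σ : Matrix n n ℂ} (hρ : ρ.PosSemidef) (hσ : σ.PosSemidef) : ℝ :=
  traceNorm (Matrix.PosSemidef.sqrt hρ * Matrix.PosSemidef.sqrt hσ)

/-- Partial trace over the second tensor factor. -/
noncomputable def ptraceB {a b : Type*} [Fintype a] [Fintype b]
    (ρ : Matrix (a × b) (a × b) ℂ) : Matrix a a ℂ :=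
  fun i j => ∑ k : b, ρ (i, k) (j, k)

/-- Output of a quantum operation given in Kraus form. -/
noncomputable def applyKraus {n m : Type*} [Fintype n] [Fintype m] {r : ℕ}
    (K : Fin r → Matrix m n ℂ) (ρ : Matrix n n ℂ) : Matrix m m ℂ :=
  ∑ j, K j * ρ * (K j)ᴴ

/-- The Kraus family is trace preserving. -/
def TracePreserving {n m : Type*} [Fintype n] [Fintype m] [DecidableEq n] {r : ℕ}
    (K : Fin r → Matrix m n ℂ) : Prop :=
  ∑ j, (K j)ᴴ * K j = 1

/- ---------- auxiliary lemmas ---------- -/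

lemma Matrix.PosSemidef.sqrt_mul_self {n : Type*} [Fintype n] [DecidableEq n]
    {A : Matrix n n ℂ} (hA : A.PosSemidef) : hA.sqrt * hA.sqrt = A := by
  set U : Matrix n n ℂ := (hA.1.eigenvectorUnitary : Matrix n n ℂ) with hU
  have hVV' : star U * U = 1 := (Matrix.mem_unitaryGroup_iff').mp (hA.1.eigenvectorUnitary).2
  have hspec : A = U * diagonal (RCLike.ofReal ∘ hA.1.eigenvalues) * star U :=
    hA.1.spectral_theorem
  have hdef : hA.sqrt = U * diagonal (((↑) : ℝ → ℂ) ∘ Real.sqrt ∘ hA.1.eigenvalues) * star U :=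
    rfl
  rw [hdef]
  refine Eq.trans ?_ hspec.symm
  simp only [Matrix.mul_assoc]
  rw [← Matrix.mul_assoc (star U) U, hVV', Matrix.one_mul, ← Matrix.mul_assoc
    (diagonal _) (diagonal _), diagonal_mul_diagonal]
  congr 3
  funext i
  simp only [Function.comp_apply]
  rw [← Complex.ofReal_mul, Real.mul_self_sqrt (hA.eigenvalues_nonneg i)]
  rfl

lemma Matrix.PosSemidef.posSemidef_sqrt {n : Type*} [Fintype n] [DecidableEq n]
    {A : Matrix n n ℂ} (hA : A.PosSemidef) : hA.sqrt.PosSemidef := by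
  have h := (posSemidef_diagonal_iff
    (d := ((↑) : ℝ → ℂ) ∘ Real.sqrt ∘ hA.1.eigenvalues).mpr
    (fun i => Complex.zero_le_real.mpr (Real.sqrt_nonneg _))).mul_mul_conjTranspose_same
    (hA.1.eigenvectorUnitary : Matrix n n ℂ)
  exact h

lemma pinv_exists {n : Type*} [Fintype n] [DecidableEq n] {s : Matrix n n ℂ}
    (hs : s.IsHermitian) :
    ∃ sp P : Matrix n n ℂ, s * sp = P ∧ sp * s = P ∧ P.IsHermitian ∧ sp.IsHermitian ∧
      P * P = P ∧ P * s = s ∧ s * P = s ∧ sp * (s * s) * sp = P := by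
  classical
  set V : Matrix n n ℂ := (hs.eigenvectorUnitary : Matrix n n ℂ) with hV
  have hVV' : star V * V = 1 := (Matrix.mem_unitaryGroup_iff').mp (hs.eigenvectorUnitary).2
  set lam : n → ℝ := hs.eigenvalues with hlam
  have hspec : s = V * diagonal (RCLike.ofReal ∘ lam) * star V := hs.spectral_theorem
  set cf : (n → ℝ) → Matrix n n ℂ := fun f => V * diagonal (fun i => ((f i : ℝ) : ℂ)) * star V
    with hcf
  have key : ∀ f g : n → ℝ, cf f * cf g = cf (fun i => f i * g i) := by
    intro f g
    simp only [hcf, Matrix.mul_assoc]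
    rw [← Matrix.mul_assoc (star V) V, hVV', Matrix.one_mul, ← Matrix.mul_assoc
      (diagonal _) (diagonal _), diagonal_mul_diagonal]
    congr 2
    ext i
    push_cast
    ring
  have herm : ∀ f : n → ℝ, (cf f).IsHermitian := by
    intro f
    have : star V = Vᴴ := rfl
    rw [hcf]
    simp only [this]
    exact isHermitian_mul_mul_conjTranspose V
      (isHermitian_diagonal_of_self_adjoint _ (by ext i; simp [Pi.star_apply, Complex.star_def,
        Complex.conj_ofReal]))
  have hcs : cf lam = s := by
    rw [hcf]
    exact hspec.symm
  have cfext : ∀ f g : n → ℝ, (∀ i, f i = g i) → cf f = cf g := fun f g h =>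
    congrArg cf (funext h)
  refine ⟨cf (fun i => (lam i)⁻¹), cf (fun i => lam i * (lam i)⁻¹), ?_, ?_, herm _, herm _,
    ?_, ?_, ?_, ?_⟩
  · rw [← hcs, key]
  · rw [← hcs, key]; exact cfext _ _ fun i => by ring
  · rw [key]; exact cfext _ _ fun i => by
      rcases eq_or_ne (lam i) 0 with h | h <;> field_simp [h]
  · rw [← hcs, key]; exact cfext _ _ fun i => by
      rcases eq_or_ne (lam i) 0 with h | h <;> field_simp [h]
  · rw [← hcs, key]; exact cfext _ _ fun i => by
      rcases eq_or_ne (lam i) 0 with h | h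
      · simp [h]
      · field_simp [h]
  · rw [← hcs, key, key, key]; exact cfext _ _ fun i => by
      rcases eq_or_ne (lam i) 0 with h | h
      · simp [h]
      · field_simp [h]

lemma ptraceB_posSemidef {a b : Type*} [Fintype a] [Fintype b] [DecidableEq a] [DecidableEq b]
    {ρ : Matrix (a × b) (a × b) ℂ} (hρ : ρ.PosSemidef) : (ptraceB ρ).PosSemidef := by
  refine Matrix.PosSemidef.of_dotProduct_mulVec_nonneg ?_ ?_
  · ext i j
    simp only [conjTranspose_apply, ptraceB, star_sum]
    exact Finset.sum_congr rfl fun k _ => congrFun (congrFun hρ.1 (i,k)) (j,k)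
  · intro x
    have key : ∀ k : b, star (fun i : a × b => if i.2 = k then x i.1 else 0) ⬝ᵥ
          ρ *ᵥ (fun i : a × b => if i.2 = k then x i.1 else 0) =
          ∑ i : a, ∑ i' : a, star (x i) * (ρ (i,k) (i',k) * x i') := by
      intro k
      simp only [dotProduct, mulVec, Pi.star_apply]
      rw [Fintype.sum_prod_type]
      refine Finset.sum_congr rfl fun i _ => ?_
      rw [Finset.sum_eq_single k]
      · rw [if_pos rfl, Fintype.sum_prod_type, Finset.mul_sum]
        refine Finset.sum_congr rfl fun i' _ => ?_
        congr 1
        rw [Finset.sum_eq_single k]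
        · rw [if_pos rfl]
        · intro k2 _ hk2; simp [hk2]
        · simp
      · intro k1 _ hk1
        simp [hk1]
      · simp
    have lhs : star x ⬝ᵥ ptraceB ρ *ᵥ x =
        ∑ k : b, ∑ i : a, ∑ i' : a, star (x i) * (ρ (i,k) (i',k) * x i') := by
      simp only [dotProduct, mulVec, ptraceB, Pi.star_apply, Finset.mul_sum, Finset.sum_mul]
      exact (Finset.sum_congr rfl fun i _ => Finset.sum_comm).trans Finset.sum_comm
    rw [lhs]
    exact Finset.sum_nonneg fun k _ => by rw [← key k]; exact hρ.dotProduct_mulVec_nonneg _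

lemma sum_mul_conjTranspose_eq_zero {ι n m : Type*} [Fintype ι] [Fintype n] [Fintype m]
    (A : ι → Matrix n m ℂ) (h : ∑ i, A i * (A i)ᴴ = 0) : ∀ i, A i = 0 := by
  intro i0
  ext r c
  have h1 : (∑ i, ∑ c0 : m, (Complex.normSq (A i r c0) : ℂ)) = 0 := by
    have := congrFun (congrFun h r) r
    simp only [Matrix.sum_apply, Matrix.mul_apply, conjTranspose_apply, Matrix.zero_apply] at this
    rw [← this]
    refine Finset.sum_congr rfl fun i _ => Finset.sum_congr rfl fun c0 _ => ?_
    rw [← Complex.mul_conj]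
    rfl
  have h2 : (∑ i, ∑ c0 : m, Complex.normSq (A i r c0)) = 0 := by exact_mod_cast h1
  have h3 : Complex.normSq (A i0 r c) = 0 := by
    have hnn : ∀ i ∈ Finset.univ (α := ι), 0 ≤ ∑ c0 : m, Complex.normSq (A i r c0) :=
      fun i _ => Finset.sum_nonneg fun c0 _ => Complex.normSq_nonneg _
    have := (Finset.sum_eq_zero_iff_of_nonneg hnn).mp h2 i0 (Finset.mem_univ _)
    exact (Finset.sum_eq_zero_iff_of_nonneg
      (fun c0 _ => Complex.normSq_nonneg _)).mp this c (Finset.mem_univ _)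
  simpa using Complex.normSq_eq_zero.mp h3

lemma kron_conjTranspose {l m n p : Type*} (A : Matrix l m ℂ) (B : Matrix n p ℂ) :
    (A ⊗ₖ B)ᴴ = Aᴴ ⊗ₖ Bᴴ := by
  ext i j
  simp [conjTranspose_apply, kroneckerMap_apply]

lemma kron_sum_right {l m n p ι : Type*} [Fintype ι] (A : Matrix l m ℂ) (B : ι → Matrix n p ℂ) :
    A ⊗ₖ (∑ i, B i) = ∑ i, A ⊗ₖ B i := by
  ext x y
  simp [kroneckerMap_apply, Matrix.sum_apply, Finset.mul_sum]

section
variable {χ d e : Type*} [Fintype χ] [DecidableEq χ]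
  [Fintype d] [DecidableEq d] [Fintype e] [DecidableEq e]

/-- Partial trace over the last register of `X ⊗ (D ⊗ E)`. -/
noncomputable def ptrLast {b : Type*} [Fintype b]
    (ρ : Matrix (χ × d × b) (χ × d × b) ℂ) : Matrix (χ × d) (χ × d) ℂ :=
  fun i j => ∑ k : b, ρ (i.1, i.2, k) (j.1, j.2, k)

/-- Partial trace over the first register. -/
noncomputable def ptrFst {a b : Type*} [Fintype a] [Fintype b]
    (ρ : Matrix (a × b) (a × b) ℂ) : Matrix b b ℂ :=
  fun i j => ∑ k : a, ρ (k, i) (k, j)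

/-- The maximally mixed state on a register. -/
noncomputable def uniformOn (χ : Type*) [Fintype χ] [DecidableEq χ] : Matrix χ χ ℂ :=
  ((Fintype.card χ : ℂ))⁻¹ • (1 : Matrix χ χ ℂ)

/-- Any state whose classical part `X` is uniform relative to the devices `D` is
the image, under an `X`-controlled operation acting on the adversary register, of a
state whose `X` is globally uniform (Uhlmann construction, with `E' = D ⊗ E`). -/
theorem device_uniform_from_global_uniform
    (p : χ → ℝ) (ρDE : χ → Matrix (d × e) (d × e) ℂ)
    (hp : ∀ x, 0 ≤ p x) (hpsum : ∑ x, p x = 1)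
    (hρDE : ∀ x, (ρDE x).PosSemidef ∧ (ρDE x).trace = 1)
    -- the cq-state ρ' on X ⊗ D ⊗ E
    (ρ' : Matrix (χ × d × e) (χ × d × e) ℂ)
    (hρ' : ρ' = ∑ x, (p x : ℂ) • (single x x 1 ⊗ₖ ρDE x))
    -- X is uniform-to-D: ρ'_{XD} = U_X ⊗ ρ'_D
    (hunif : ptrLast (χ := χ) ρ' = uniformOn χ ⊗ₖ ptrFst (ptrLast (χ := χ) ρ')) :
    -- E' := d × e is the purifying register
    ∃ (σ : Matrix (d × (d × e)) (d × (d × e)) ℂ), IsDensity σ ∧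
      ∃ (r : ℕ) (M : χ → Fin r → Matrix e (d × e) ℂ),
        (∀ x, TracePreserving (M x)) ∧
        ρ' = ∑ x : χ, ∑ j,
          (single x x 1 ⊗ₖ ((1 : Matrix d d ℂ) ⊗ₖ M x j)) *
            (uniformOn χ ⊗ₖ σ) *
          (single x x 1 ⊗ₖ ((1 : Matrix d d ℂ) ⊗ₖ M x j))ᴴ := by
  classical
  -- nonemptiness
  have hχne : Nonempty χ := by
    by_contra h
    rw [not_nonempty_iff] at h
    rw [Finset.univ_eq_empty, Finset.sum_empty] at hpsum
    exact zero_ne_one hpsum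
  obtain ⟨x0⟩ := hχne
  have hdene : Nonempty (d × e) := by
    by_contra h
    rw [not_nonempty_iff] at h
    have := (hρDE x0).2
    rw [Matrix.trace, Finset.univ_eq_empty, Finset.sum_empty] at this
    exact zero_ne_one this
  obtain ⟨i0, e0⟩ := hdene
  set c : ℂ := (Fintype.card χ : ℂ) with hcdef
  have hc0 : c ≠ 0 := by
    have : 0 < Fintype.card χ := Fintype.card_pos_iff.mpr ⟨x0⟩
    exact_mod_cast Nat.cast_ne_zero.mpr this.ne'
  -- entries of the partial trace
  have hptr : ∀ (x x' : χ) (i i' : d), ptrLast (χ := χ) ρ' (x, i) (x', i') =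
      (if x = x' then (p x : ℂ) * ptraceB (ρDE x) i i' else 0) := by
    intro x x' i i'
    have : ptrLast (χ := χ) ρ' (x, i) (x', i') = ∑ k : e, ρ' (x, i, k) (x', i', k) := rfl
    rw [this, hρ']
    simp only [Matrix.sum_apply, Matrix.smul_apply, Matrix.kroneckerMap_apply, smul_eq_mul,
      single, Matrix.of_apply]
    rw [Finset.sum_comm]
    rcases eq_or_ne x x' with rfl | hxx
    · rw [if_pos rfl]
      rw [Finset.sum_eq_single x]
      · rw [if_pos ⟨rfl, rfl⟩]
        have : ptraceB (ρDE x) i i' = ∑ k : e, ρDE x (i, k) (i', k) := rfl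
        rw [this, Finset.mul_sum]
        refine Finset.sum_congr rfl fun k _ => by ring
      · intro x2 _ hx2
        refine Finset.sum_eq_zero fun k _ => ?_
        rw [if_neg (by tauto), zero_mul, mul_zero]
      · simp
    · rw [if_neg hxx]
      refine Finset.sum_eq_zero fun x2 _ => Finset.sum_eq_zero fun k _ => ?_
      rw [if_neg (by rintro ⟨rfl, rfl⟩; exact hxx rfl), zero_mul, mul_zero]
  -- the marginal on D
  set ρ0 : Matrix d d ℂ := ptrFst (ptrLast (χ := χ) ρ') with hρ0def
  have hxd : ∀ x : χ, ∀ i i' : d, (p x : ℂ) * ptraceB (ρDE x) i i' = c⁻¹ * ρ0 i i' := by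
    intro x i i'
    have h := congrFun (congrFun hunif ((x, i) : χ × d)) ((x, i') : χ × d)
    rw [hptr x x i i', if_pos rfl] at h
    rw [h]
    simp only [Matrix.kroneckerMap_apply, uniformOn, Matrix.smul_apply, Matrix.one_apply_eq,
      smul_eq_mul, mul_one]
    rfl
  have htrB : ∀ x, ∑ i, ptraceB (ρDE x) i i = 1 := by
    intro x
    have h := (hρDE x).2
    rw [Matrix.trace, Fintype.sum_prod_type] at h
    simpa [ptraceB, Matrix.diag] using h
  have hstar : ∀ x : χ, (p x : ℂ) = c⁻¹ * ∑ i, ρ0 i i := by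
    intro x
    calc (p x : ℂ) = (p x : ℂ) * ∑ i, ptraceB (ρDE x) i i := by rw [htrB x, mul_one]
    _ = ∑ i, (p x : ℂ) * ptraceB (ρDE x) i i := Finset.mul_sum _ _ _
    _ = ∑ i, c⁻¹ * ρ0 i i := Finset.sum_congr rfl fun i _ => hxd x i i
    _ = c⁻¹ * ∑ i, ρ0 i i := (Finset.mul_sum _ _ _).symm
  have htr0 : ∑ i, ρ0 i i = 1 := by
    have hsum : (∑ x, (p x : ℂ)) = 1 := by
      have := congrArg (fun r : ℝ => (r : ℂ)) hpsum
      push_cast at this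
      exact this
    rw [Finset.sum_congr rfl (fun x _ => hstar x), Finset.sum_const, Finset.card_univ,
      nsmul_eq_mul] at hsum
    have h2 : c * (c⁻¹ * ∑ i, ρ0 i i) = 1 := by rw [hcdef]; exact hsum
    rw [← mul_assoc, mul_inv_cancel₀ hc0, one_mul] at h2
    exact h2
  have hpx : ∀ x, (p x : ℂ) = c⁻¹ := by
    intro x
    rw [hstar x, htr0, mul_one]
  have hBx : ∀ x, ptraceB (ρDE x) = ρ0 := by
    intro x
    ext i i'
    have h := hxd x i i'
    rw [hpx x] at h
    exact mul_left_cancel₀ (inv_ne_zero hc0) h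
  -- square roots and pseudo-inverse
  have hρ0psd : ρ0.PosSemidef := by rw [← hBx x0]; exact ptraceB_posSemidef (hρDE x0).1
  set s : Matrix d d ℂ := hρ0psd.sqrt with hsdef
  have hss : s * s = ρ0 := hρ0psd.sqrt_mul_self
  have hsherm : s.IsHermitian := hρ0psd.posSemidef_sqrt.1
  obtain ⟨sp, P, hsp1, hsp2, hPh, hsph, hPP, hPs, hsP, hPmid⟩ := pinv_exists hsherm
  -- the globally uniform state
  set φ : d × (d × e) → ℂ := fun a => s a.1 a.2.1 * (if a.2.2 = e0 then 1 else 0) with hφdef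
  set σ : Matrix (d × (d × e)) (d × (d × e)) ℂ := Matrix.of (fun a b => φ a * star (φ b))
    with hσdef
  -- pointwise square roots and Kraus operators
  set t : χ → Matrix (d × e) (d × e) ℂ := fun x => ((hρDE x).1).sqrt with htdef
  have htt : ∀ x, t x * t x = ρDE x := fun x => ((hρDE x).1).sqrt_mul_self
  have hth : ∀ x, (t x)ᴴ = t x := fun x => ((hρDE x).1).posSemidef_sqrt.1
  set T : χ → (d × e) → Matrix d e ℂ := fun x b => Matrix.of (fun i m => t x (i, m) b) with hTdef
  set K : χ → (d × e) → Matrix e (d × e) ℂ := fun x b =>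
    Matrix.of (fun m (a : d × e) => if a.2 = e0 then (sp * T x b) a.1 m else 0) with hKdef
  set R : Matrix (d × e) (d × e) ℂ := Matrix.of (fun (a a' : d × e) =>
    (if a.2 = e0 then 1 else 0) * (if a'.2 = e0 then 1 else 0) * P a'.1 a.1) with hRdef
  set Q : Matrix (d × e) (d × e) ℂ := 1 - R with hQdef
  set L : (d × e) → Matrix e (d × e) ℂ := fun cc =>
    Matrix.of (fun m (a : d × e) => if m = e0 then star (Q a cc) else 0) with hLdef
  -- basic facts
  have hPs' : ∀ u v : d, star (P u v) = P v u := by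
    intro u v
    have := congrFun (congrFun hPh.eq v) u
    rw [conjTranspose_apply] at this
    exact this
  have hσdens : IsDensity σ := by
    constructor
    · refine Matrix.PosSemidef.of_dotProduct_mulVec_nonneg ?_ ?_
      · ext a b
        rw [conjTranspose_apply, hσdef]
        simp only [of_apply, star_mul', star_star]
        ring
      · intro x
        have hval : star x ⬝ᵥ σ *ᵥ x =
            star (∑ b, star (φ b) * x b) * (∑ b, star (φ b) * x b) := by
          simp only [dotProduct, mulVec, hσdef, of_apply, Pi.star_apply, star_sum, star_mul',
            star_star]
          rw [Finset.sum_mul_sum]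
          refine Finset.sum_congr rfl fun a _ => ?_
          rw [Finset.mul_sum]
          refine Finset.sum_congr rfl fun b _ => ?_
          ring
        rw [hval]
        exact star_mul_self_nonneg _
    · have h1 : σ.trace = ∑ i : d, ∑ a : d × e, φ (i, a) * star (φ (i, a)) := by
        rw [Matrix.trace, Fintype.sum_prod_type]
        rfl
      rw [h1]
      have h2 : ∀ i : d, ∑ a : d × e, φ (i, a) * star (φ (i, a)) = ρ0 i i := by
        intro i
        rw [Fintype.sum_prod_type]
        have h3 : ∀ j : d, ∑ k : e, φ (i, (j, k)) * star (φ (i, (j, k))) =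
            s i j * star (s i j) := by
          intro j
          rw [Finset.sum_eq_single e0]
          · simp [hφdef]
          · intro k _ hk; simp [hφdef, hk]
          · simp
        rw [Finset.sum_congr rfl fun j _ => h3 j]
        have h4 : ∀ j : d, star (s i j) = s j i := by
          intro j
          have := congrFun (congrFun hsherm.eq j) i
          rw [conjTranspose_apply] at this
          exact this
        rw [Finset.sum_congr rfl fun j _ => by rw [h4 j]]
        have := congrFun (congrFun hss i) i
        rw [Matrix.mul_apply] at this
        exact this
      rw [Finset.sum_congr rfl fun i _ => h2 i]
      exact htr0
  have hTT : ∀ x, ∑ b : d × e, T x b * (T x b)ᴴ = ρ0 := by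
    intro x
    ext i i'
    rw [Matrix.sum_apply]
    have h1 : ∀ b : d × e, (T x b * (T x b)ᴴ) i i' =
        ∑ m : e, t x (i, m) b * star (t x (i', m) b) := by
      intro b
      rw [Matrix.mul_apply]
      refine Finset.sum_congr rfl fun m _ => ?_
      rw [conjTranspose_apply]
      rfl
    rw [Finset.sum_congr rfl fun b _ => h1 b, Finset.sum_comm]
    have h2 : ∀ m : e, ∑ b : d × e, t x (i, m) b * star (t x (i', m) b) =
        ρDE x (i, m) (i', m) := by
      intro m
      have h3 : (t x * (t x)ᴴ) (i, m) (i', m) = ρDE x (i, m) (i', m) := by rw [hth, htt]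
      rw [Matrix.mul_apply] at h3
      rw [← h3]
      exact Finset.sum_congr rfl fun b _ => by rw [conjTranspose_apply]
    rw [Finset.sum_congr rfl fun m _ => h2 m, ← hBx x]
    rfl
  have hPT : ∀ x b, P * T x b = T x b := by
    intro x b
    have h1P : (1 - P)ᴴ = 1 - P := by rw [conjTranspose_sub, conjTranspose_one, hPh.eq]
    have hz : ∑ b : d × e, ((1 - P) * T x b) * ((1 - P) * T x b)ᴴ = 0 := by
      have hterm : ∀ b : d × e, ((1 - P) * T x b) * ((1 - P) * T x b)ᴴ =
          (1 - P) * (T x b * (T x b)ᴴ) * (1 - P) := by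
        intro b
        rw [Matrix.conjTranspose_mul, h1P]
        simp only [Matrix.mul_assoc]
      rw [Finset.sum_congr rfl fun b _ => hterm b, ← Finset.sum_mul, ← Finset.mul_sum, hTT x,
        ← hss]
      have h0 : (1 - P) * s = 0 := by rw [Matrix.sub_mul, Matrix.one_mul, hPs, sub_self]
      calc (1 - P) * (s * s) * (1 - P) = ((1 - P) * s) * (s * (1 - P)) := by
            simp only [Matrix.mul_assoc]
        _ = 0 := by rw [h0, Matrix.zero_mul]
    have h2 := sum_mul_conjTranspose_eq_zero (fun b => (1 - P) * T x b) hz b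
    have h3 : T x b - P * T x b = 0 := by
      have h4 : (1 - P) * T x b = T x b - P * T x b := by
        rw [Matrix.sub_mul, Matrix.one_mul]
      rw [← h4]
      exact h2
    exact (sub_eq_zero.mp h3).symm
  have hsT : ∀ x b, s * (sp * T x b) = T x b := by
    intro x b
    rw [← Matrix.mul_assoc, hsp1, hPT]
  have hKsum : ∀ x, ∑ b : d × e, (sp * T x b) * (sp * T x b)ᴴ = P := by
    intro x
    have hterm : ∀ b : d × e, (sp * T x b) * (sp * T x b)ᴴ =
        sp * (T x b * (T x b)ᴴ) * sp := by
      intro b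
      rw [Matrix.conjTranspose_mul, hsph.eq]
      simp only [Matrix.mul_assoc]
    rw [Finset.sum_congr rfl fun b _ => hterm b, ← Finset.sum_mul, ← Finset.mul_sum, hTT x,
      ← hss, hPmid]
  have hRH : Rᴴ = R := by
    ext a a'
    rw [conjTranspose_apply, hRdef]
    simp only [of_apply, star_mul', apply_ite (star (R := ℂ)), star_one, star_zero, hPs']
    ring
  have hRR : R * R = R := by
    ext a a'
    rw [Matrix.mul_apply, hRdef]
    simp only [of_apply]
    have hstep : ∀ x2 : d × e,
        ((if a.2 = e0 then (1:ℂ) else 0) * (if x2.2 = e0 then (1:ℂ) else 0) * P x2.1 a.1) *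
          ((if x2.2 = e0 then (1:ℂ) else 0) * (if a'.2 = e0 then (1:ℂ) else 0) * P a'.1 x2.1) =
        ((if a.2 = e0 then (1:ℂ) else 0) * (if a'.2 = e0 then (1:ℂ) else 0)) *
          ((if x2.2 = e0 then (1:ℂ) else 0) * (P x2.1 a.1 * P a'.1 x2.1)) := by
      intro x2
      rcases eq_or_ne x2.2 e0 with h | h
      · rw [if_pos h]; ring
      · rw [if_neg h]; ring
    rw [Finset.sum_congr rfl fun x2 _ => hstep x2, ← Finset.mul_sum]
    congr 1
    rw [Fintype.sum_prod_type]
    have hj : ∀ j2 : d, ∑ k2 : e, (if k2 = e0 then (1:ℂ) else 0) *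
        (P j2 a.1 * P a'.1 j2) = P j2 a.1 * P a'.1 j2 := by
      intro j2
      rw [Finset.sum_eq_single e0]
      · simp
      · intro k2 _ hk2; simp [hk2]
      · simp
    rw [Finset.sum_congr rfl fun j2 _ => hj j2]
    have h3 := congrFun (congrFun hPP a'.1) a.1
    rw [Matrix.mul_apply] at h3
    rw [← h3]
    exact Finset.sum_congr rfl fun j2 _ => mul_comm _ _
  have hKK : ∀ x, ∑ b : d × e, (K x b)ᴴ * K x b = R := by
    intro x
    ext a a'
    rw [Matrix.sum_apply]
    have h1 : ∀ b : d × e, ((K x b)ᴴ * K x b) a a' =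
        (if a.2 = e0 then (1:ℂ) else 0) * (if a'.2 = e0 then (1:ℂ) else 0) *
          ∑ m : e, (sp * T x b) a'.1 m * star ((sp * T x b) a.1 m) := by
      intro b
      rw [Matrix.mul_apply, Finset.mul_sum]
      refine Finset.sum_congr rfl fun m _ => ?_
      rw [conjTranspose_apply, hKdef]
      simp only [of_apply]
      by_cases h1 : a.2 = e0 <;> by_cases h2 : a'.2 = e0 <;> simp [h1, h2] <;> ring
    rw [Finset.sum_congr rfl fun b _ => h1 b, ← Finset.mul_sum]
    have h2 : ∑ b : d × e, ∑ m : e, (sp * T x b) a'.1 m * star ((sp * T x b) a.1 m) =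
        P a'.1 a.1 := by
      have h3 := congrFun (congrFun (hKsum x) a'.1) a.1
      rw [Matrix.sum_apply] at h3
      rw [← h3]
      refine Finset.sum_congr rfl fun b _ => ?_
      rw [Matrix.mul_apply]
      exact Finset.sum_congr rfl fun m _ => by rw [conjTranspose_apply]
    rw [h2, hRdef]
    rfl
  have hQH : Qᴴ = Q := by rw [hQdef, conjTranspose_sub, conjTranspose_one, hRH]
  have hQQ : Q * Q = Q := by
    rw [hQdef]
    simp only [Matrix.sub_mul, Matrix.mul_sub, Matrix.one_mul, Matrix.mul_one, hRR]
    abel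
  have hLL : ∑ cc : d × e, (L cc)ᴴ * L cc = Q := by
    have hQQH : Q * Qᴴ = Q := by rw [hQH, hQQ]
    ext a a'
    rw [Matrix.sum_apply]
    have h1 : ∀ cc : d × e, ((L cc)ᴴ * L cc) a a' = Q a cc * star (Q a' cc) := by
      intro cc
      rw [Matrix.mul_apply]
      rw [Finset.sum_eq_single e0]
      · rw [conjTranspose_apply, hLdef]
        simp [star_star]
      · intro m _ hm
        rw [conjTranspose_apply, hLdef]
        simp [hm]
      · simp
    rw [Finset.sum_congr rfl fun cc _ => h1 cc]
    have h2 := congrFun (congrFun hQQH a) a'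
    rw [Matrix.mul_apply] at h2
    rw [← h2]
    exact Finset.sum_congr rfl fun cc _ => by rw [conjTranspose_apply]
  have hTP : ∀ x, (∑ b : d × e, (K x b)ᴴ * K x b) + (∑ cc : d × e, (L cc)ᴴ * L cc) = 1 := by
    intro x
    rw [hKK x, hLL, hQdef]
    abel
  have hgen : ∀ N : Matrix e (d × e) ℂ, ((1 : Matrix d d ℂ) ⊗ₖ N) * σ *
      ((1 : Matrix d d ℂ) ⊗ₖ N)ᴴ = Matrix.of (fun u v : d × e =>
        (∑ a : d × e, N u.2 a * φ (u.1, a)) * star (∑ a : d × e, N v.2 a * φ (v.1, a))) := by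
    intro N
    ext u v
    rw [Matrix.mul_apply]
    have hfirst : ∀ w : d × (d × e), (((1 : Matrix d d ℂ) ⊗ₖ N) * σ) u w =
        (∑ a : d × e, N u.2 a * φ (u.1, a)) * star (φ w) := by
      intro w
      rw [Matrix.mul_apply, Fintype.sum_prod_type, Finset.sum_eq_single u.1]
      · simp only [kroneckerMap_apply, Matrix.one_apply_eq, one_mul, hσdef, of_apply]
        rw [Finset.sum_mul]
        exact Finset.sum_congr rfl fun a _ => by ring
      · intro i2 _ hi2
        refine Finset.sum_eq_zero fun a _ => ?_
        rw [kroneckerMap_apply, Matrix.one_apply_ne (Ne.symm hi2), zero_mul, zero_mul]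
      · simp
    rw [Finset.sum_congr rfl fun w _ => by rw [hfirst w]]
    have hsec : ∑ w : d × (d × e), ((1 : Matrix d d ℂ) ⊗ₖ N) v w * φ w =
        ∑ a : d × e, N v.2 a * φ (v.1, a) := by
      rw [Fintype.sum_prod_type, Finset.sum_eq_single v.1]
      · refine Finset.sum_congr rfl fun a _ => ?_
        rw [kroneckerMap_apply, Matrix.one_apply_eq, one_mul]
      · intro i2 _ hi2
        refine Finset.sum_eq_zero fun a _ => ?_
        rw [kroneckerMap_apply, Matrix.one_apply_ne (Ne.symm hi2), zero_mul, zero_mul]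
      · simp
    have hmid : ∑ w : d × (d × e), ((∑ a : d × e, N u.2 a * φ (u.1, a)) * star (φ w)) *
        (((1 : Matrix d d ℂ) ⊗ₖ N)ᴴ w v) = (∑ a : d × e, N u.2 a * φ (u.1, a)) *
          star (∑ w : d × (d × e), ((1 : Matrix d d ℂ) ⊗ₖ N) v w * φ w) := by
      rw [star_sum, Finset.mul_sum]
      refine Finset.sum_congr rfl fun w _ => ?_
      rw [conjTranspose_apply, star_mul' (((1 : Matrix d d ℂ) ⊗ₖ N) v w) (φ w)]
      ring
    rw [hmid, hsec]
    rfl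
  have hKσ : ∀ x, ∑ b : d × e, ((1 : Matrix d d ℂ) ⊗ₖ K x b) * σ *
      ((1 : Matrix d d ℂ) ⊗ₖ K x b)ᴴ = ρDE x := by
    intro x
    have hg : ∀ (b : d × e) (u : d × e), ∑ a : d × e, K x b u.2 a * φ (u.1, a) = t x u b := by
      intro b u
      obtain ⟨i, m⟩ := u
      rw [Fintype.sum_prod_type]
      have hcol : ∀ j : d, ∑ k : e, K x b m (j, k) * φ (i, (j, k)) =
          (sp * T x b) j m * s i j := by
        intro j
        rw [Finset.sum_eq_single e0]
        · rw [hKdef, hφdef]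
          simp
        · intro k _ hk
          rw [hKdef, hφdef]
          simp [hk]
        · simp
      rw [Finset.sum_congr rfl fun j _ => hcol j]
      have h2 := congrFun (congrFun (hsT x b) i) m
      rw [Matrix.mul_apply] at h2
      rw [Finset.sum_congr rfl fun j _ => mul_comm ((sp * T x b) j m) (s i j), h2]
      rfl
    rw [Finset.sum_congr rfl fun b _ => hgen (K x b)]
    ext u v
    rw [Matrix.sum_apply]
    have h5 : ∀ b : d × e, Matrix.of (fun u v : d × e =>
        (∑ a : d × e, K x b u.2 a * φ (u.1, a)) *
          star (∑ a : d × e, K x b v.2 a * φ (v.1, a))) u v =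
        t x u b * star (t x v b) := by
      intro b
      simp only [Matrix.of_apply]
      rw [hg b u, hg b v]
    rw [Finset.sum_congr rfl fun b _ => h5 b]
    have h3 : (t x * (t x)ᴴ) u v = ρDE x u v := by rw [hth, htt]
    rw [Matrix.mul_apply] at h3
    rw [← h3]
    exact Finset.sum_congr rfl fun b _ => by rw [conjTranspose_apply]
  have hLσ : ∀ cc : d × e, ((1 : Matrix d d ℂ) ⊗ₖ L cc) * σ *
      ((1 : Matrix d d ℂ) ⊗ₖ L cc)ᴴ = 0 := by
    intro cc
    have hg0 : ∀ u : d × e, ∑ a : d × e, L cc u.2 a * φ (u.1, a) = 0 := by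
      intro u
      obtain ⟨i, m⟩ := u
      rw [Fintype.sum_prod_type]
      have hcol : ∀ j : d, ∑ k : e, L cc m (j, k) * φ (i, (j, k)) =
          (if m = e0 then (1:ℂ) else 0) * (star (Q (j, e0) cc) * s i j) := by
        intro j
        rw [Finset.sum_eq_single e0]
        · rw [hLdef, hφdef]
          simp only [of_apply, eq_self_iff_true, if_true, ite_true, mul_one]
          rcases eq_or_ne m e0 with h | h
          · rw [if_pos h, if_pos h, one_mul]
          · rw [if_neg h, if_neg h, zero_mul, zero_mul]
        · intro k _ hk
          rw [hLdef, hφdef]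
          simp [hk]
        · simp
      rw [Finset.sum_congr rfl fun j _ => hcol j, ← Finset.mul_sum]
      have hz : ∑ j : d, star (Q (j, e0) cc) * s i j = 0 := by
        have hQe : ∀ j : d, star (Q (j, e0) cc) =
            (if (j, e0) = cc then (1:ℂ) else 0) -
              (if cc.2 = e0 then (1:ℂ) else 0) * P j cc.1 := by
          intro j
          rw [hQdef, hRdef]
          simp only [Matrix.sub_apply, Matrix.one_apply, of_apply, star_sub, star_mul',
            apply_ite (star (R := ℂ)), star_one, star_zero, hPs', eq_self_iff_true, if_true,
            ite_true]
          ring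
        rw [Finset.sum_congr rfl fun j _ => by rw [hQe j]]
        simp only [sub_mul]
        rw [Finset.sum_sub_distrib]
        obtain ⟨c1, c2⟩ := cc
        rcases eq_or_ne c2 e0 with hc2 | hc2
        · have hA : ∑ j : d, (if ((j, e0) : d × e) = (c1, c2) then (1:ℂ) else 0) * s i j =
              s i c1 := by
            rw [Finset.sum_eq_single c1]
            · rw [if_pos (by rw [hc2]), one_mul]
            · intro j _ hj
              rw [if_neg (fun h => hj (congrArg Prod.fst h)), zero_mul]
            · simp
          have hB : ∑ j : d, ((if c2 = e0 then (1:ℂ) else 0) * P j c1) * s i j =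
              s i c1 := by
            have h6 := congrFun (congrFun hsP i) c1
            rw [Matrix.mul_apply] at h6
            rw [← h6]
            refine Finset.sum_congr rfl fun j _ => ?_
            rw [if_pos hc2, one_mul]
            ring
          rw [hA, hB, sub_self]
        · have hA : ∑ j : d, (if ((j, e0) : d × e) = (c1, c2) then (1:ℂ) else 0) * s i j =
              0 := by
            refine Finset.sum_eq_zero fun j _ => ?_
            rw [if_neg (fun h => hc2 ((congrArg Prod.snd h).symm)), zero_mul]
          have hB : ∑ j : d, ((if c2 = e0 then (1:ℂ) else 0) * P j c1) * s i j = 0 := by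
            refine Finset.sum_eq_zero fun j _ => ?_
            rw [if_neg hc2, zero_mul, zero_mul]
          rw [hA, hB, sub_self]
      rw [hz, mul_zero]
    rw [hgen (L cc)]
    ext u v
    simp only [Matrix.of_apply, Matrix.zero_apply, hg0 u, zero_mul]
  -- assembly
  set q : Fin (Fintype.card ((d × e) ⊕ (d × e))) ≃ ((d × e) ⊕ (d × e)) :=
    (Fintype.equivFin ((d × e) ⊕ (d × e))).symm with hqdef
  refine ⟨σ, hσdens, Fintype.card ((d × e) ⊕ (d × e)),
    fun x jj => Sum.elim (K x) L (q jj), ?_, ?_⟩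
  · intro x
    show (∑ jj, (Sum.elim (K x) L (q jj))ᴴ * Sum.elim (K x) L (q jj)) = 1
    rw [Equiv.sum_comp q (fun y => (Sum.elim (K x) L y)ᴴ * Sum.elim (K x) L y)]
    rw [Fintype.sum_sum_type]
    exact hTP x
  · rw [hρ']
    refine Finset.sum_congr rfl fun x _ => ?_
    have hstd : (single x x (1:ℂ))ᴴ = single x x 1 := by
      ext a b
      simp only [conjTranspose_apply, single, Matrix.of_apply, apply_ite, star_one,
        star_zero]
      split_ifs <;> first | rfl | tauto
    have hE : single x x (1:ℂ) * uniformOn χ * single x x 1 =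
        c⁻¹ • single x x 1 := by
      rw [uniformOn, Matrix.mul_smul, Matrix.mul_one, Matrix.smul_mul,
        single_mul_single_same, mul_one]
    have hterm : ∀ (N : Matrix e (d × e) ℂ),
        (single x x 1 ⊗ₖ ((1 : Matrix d d ℂ) ⊗ₖ N)) * (uniformOn χ ⊗ₖ σ) *
          (single x x 1 ⊗ₖ ((1 : Matrix d d ℂ) ⊗ₖ N))ᴴ =
        c⁻¹ • (single x x 1 ⊗ₖ
          (((1 : Matrix d d ℂ) ⊗ₖ N) * σ * ((1 : Matrix d d ℂ) ⊗ₖ N)ᴴ)) := by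
      intro N
      rw [kron_conjTranspose, hstd, ← Matrix.mul_kronecker_mul, ← Matrix.mul_kronecker_mul, hE,
        smul_kronecker]
    rw [Finset.sum_congr rfl (fun jj _ => hterm (Sum.elim (K x) L (q jj)))]
    rw [← Finset.smul_sum, ← kron_sum_right]
    have hsum2 : (∑ jj, ((1 : Matrix d d ℂ) ⊗ₖ Sum.elim (K x) L (q jj)) * σ *
        ((1 : Matrix d d ℂ) ⊗ₖ Sum.elim (K x) L (q jj))ᴴ) = ρDE x := by
      rw [Equiv.sum_comp q (fun y => ((1 : Matrix d d ℂ) ⊗ₖ Sum.elim (K x) L y) * σ *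
        ((1 : Matrix d d ℂ) ⊗ₖ Sum.elim (K x) L y)ᴴ)]
      rw [Fintype.sum_sum_type]
      simp only [Sum.elim_inl, Sum.elim_inr]
      rw [hKσ x, Finset.sum_congr rfl (fun cc _ => hLσ cc), Finset.sum_const, smul_zero,
        add_zero]
    rw [hsum2, hpx x]

end
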